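/- Any two distinct vertices of HCN_n (n ≥ 3) that lie in the same cluster xQ_n have exactly 0 or exactly 2 common neighbors in HCN_n, and any two distinct vertices lying in different clusters have at most 1 common neighbor in HCN_n. -/

import Mathlib

/-- Vertices of the hierarchical cubic network: pairs (cluster label, position). -/
abbrev HVert (n : ℕ) := (Fin n → Bool) × (Fin n → Bool)

/-- The hierarchical cubic network HCN_n. Within a cluster (same first coordinate),
two vertices are adjacent iff their second coordinates differ in exactly one bit.
Crossing edges: (x,y) with x ≠ y is adjacent to (y,x); (x,x) is adjacent to (x̄,x̄). -/
def HCN (n : ℕ) : SimpleGraph (HVert n) :=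
  SimpleGraph.fromRel (fun u v =>
    (u.1 = v.1 ∧ (Finset.univ.filter (fun i => u.2 i ≠ v.2 i)).card = 1) ∨
    (u.1 ≠ u.2 ∧ v = (u.2, u.1)) ∨
    (u.1 = u.2 ∧ v = (fun i => !u.1 i, fun i => !u.2 i)))

/-- `u` and `v` are joined by a crossing edge of HCN_n. -/
def IsCrossing (n : ℕ) (u v : HVert n) : Prop :=
  ((u.1 ≠ u.2 ∧ v = (u.2, u.1)) ∨ (u.1 = u.2 ∧ v = (fun i => !u.1 i, fun i => !u.2 i))) ∨
  ((v.1 ≠ v.2 ∧ u = (v.2, v.1)) ∨ (v.1 = v.2 ∧ u = (fun i => !v.1 i, fun i => !v.2 i)))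

namespace S8

variable {n : ℕ}

def diff (a b : Fin n → Bool) : Finset (Fin n) :=
  Finset.univ.filter (fun i => a i ≠ b i)

def bflip (i : Fin n) (a : Fin n → Bool) : Fin n → Bool :=
  fun j => if j = i then !a j else a j

def cross (u : HVert n) : HVert n :=
  if u.1 = u.2 then (fun i => !u.1 i, fun i => !u.2 i) else (u.2, u.1)

lemma diff_comm (a b : Fin n → Bool) : diff a b = diff b a := by
  unfold diff; apply Finset.filter_congr; intro i _; simp [ne_comm]

lemma diff_self (a : Fin n → Bool) : diff a a = ∅ := by
  simp [diff]

lemma diff_flip (a : Fin n → Bool) (i : Fin n) : diff a (bflip i a) = {i} := by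
  ext j
  simp only [diff, bflip, Finset.mem_filter, Finset.mem_univ, true_and,
    Finset.mem_singleton]
  by_cases h : j = i <;> simp [h]

lemma bflip_bflip (a : Fin n → Bool) (i : Fin n) : bflip i (bflip i a) = a := by
  funext j; simp only [bflip]; by_cases h : j = i <;> simp [h]

lemma bflip_comm (a : Fin n → Bool) (i j : Fin n) :
    bflip i (bflip j a) = bflip j (bflip i a) := by
  by_cases hij : i = j
  · subst hij; rfl
  · funext k; simp only [bflip]
    by_cases h1 : k = i <;> by_cases h2 : k = j <;>
      simp [h1, h2, hij, Ne.symm hij]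

lemma bflip_ne_self (a : Fin n → Bool) (i : Fin n) : bflip i a ≠ a := by
  intro h
  have := congrFun h i
  simp [bflip] at this

lemma bflip_ne_bflip (a : Fin n → Bool) {i j : Fin n} (h : i ≠ j) :
    bflip i a ≠ bflip j a := by
  intro he
  have := congrFun he i
  simp [bflip, h] at this

lemma diff_bflip_bflip (a : Fin n → Bool) {i j : Fin n} (h : i ≠ j) :
    diff a (bflip j (bflip i a)) = {i, j} := by
  ext k
  simp only [diff, Finset.mem_filter, Finset.mem_univ, true_and]
  simp only [diff, bflip, Finset.mem_filter, Finset.mem_univ, true_and,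
    Finset.mem_insert, Finset.mem_singleton]
  by_cases h1 : k = i <;> by_cases h2 : k = j <;> simp [h1, h2, h, Ne.symm h]

lemma card_diff_eq_one {a b : Fin n → Bool} :
    (diff a b).card = 1 ↔ ∃ i, b = bflip i a := by
  constructor
  · intro h
    obtain ⟨i, hi⟩ := Finset.card_eq_one.mp h
    refine ⟨i, funext fun j => ?_⟩
    by_cases hj : j = i
    · subst hj
      have : j ∈ diff a b := by rw [hi]; simp
      simp only [diff, Finset.mem_filter] at this
      simp only [bflip, if_pos rfl]
      revert this; cases a j <;> cases b j <;> simp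
    · have : j ∉ diff a b := by rw [hi]; simp [hj]
      simp only [diff, Finset.mem_filter, Finset.mem_univ, true_and, not_not] at this
      simp [bflip, hj, this]
  · rintro ⟨i, rfl⟩
    rw [diff_flip]; simp

lemma card_diff_not (a : Fin n → Bool) :
    (diff a (fun i => !a i)).card = n := by
  have : diff a (fun i => !a i) = Finset.univ := by
    ext j; simp [diff]
  rw [this, Finset.card_univ, Fintype.card_fin]

lemma not_ne_self (hn : 0 < n) (a : Fin n → Bool) : (fun i => !a i) ≠ a := by
  intro h
  have := congrFun h ⟨0, hn⟩
  simp at this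

lemma cross_eq_pos {u : HVert n} (h : u.1 = u.2) :
    cross u = (fun i => !u.1 i, fun i => !u.2 i) := by rw [cross, if_pos h]

lemma cross_eq_neg {u : HVert n} (h : u.1 ≠ u.2) :
    cross u = (u.2, u.1) := by rw [cross, if_neg h]

lemma cross_cross (u : HVert n) : cross (cross u) = u := by
  by_cases h : u.1 = u.2
  · rw [cross_eq_pos h, cross_eq_pos (by simp only; rw [h])]
    apply Prod.ext <;> funext i <;> simp [← h]
  · rw [cross_eq_neg h, cross_eq_neg (by simpa using Ne.symm h)]

lemma cross_fst_ne (hn : 0 < n) (u : HVert n) : (cross u).1 ≠ u.1 := by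
  by_cases h : u.1 = u.2
  · rw [cross, if_pos h]; exact not_ne_self hn u.1
  · rw [cross, if_neg h]; exact fun he => h he.symm

lemma cross_inj {u v : HVert n} (h : cross u = cross v) : u = v := by
  have := congrArg cross h
  rwa [cross_cross, cross_cross] at this

lemma adj_iff (hn : 0 < n) (u w : HVert n) :
    (HCN n).Adj u w ↔ (u.1 = w.1 ∧ (diff u.2 w.2).card = 1) ∨ w = cross u := by
  rw [HCN, SimpleGraph.fromRel_adj]
  constructor
  · rintro ⟨hne, (⟨h1, h2⟩ | ⟨h1, h2⟩ | ⟨h1, h2⟩) | (⟨h1, h2⟩ | ⟨h1, h2⟩ | ⟨h1, h2⟩)⟩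
    · exact Or.inl ⟨h1, h2⟩
    · right; rw [cross, if_neg h1]; exact h2
    · right; rw [cross, if_pos h1]; exact h2
    · left; exact ⟨h1.symm, by rw [diff_comm]; exact h2⟩
    · right
      have hcw : cross w = u := by rw [cross_eq_neg h1]; exact h2.symm
      rw [← hcw, cross_cross]
    · right
      have hcw : cross w = u := by rw [cross_eq_pos h1]; exact h2.symm
      rw [← hcw, cross_cross]
  · rintro (⟨h1, h2⟩ | rfl)
    · refine ⟨fun he => ?_, Or.inl (Or.inl ⟨h1, h2⟩)⟩
      subst he; rw [show diff u.2 u.2 = ∅ from diff_self u.2] at h2; simp at h2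
    · by_cases hc : u.1 = u.2
      · rw [cross_eq_pos hc]
        refine ⟨fun he => ?_, Or.inl (Or.inr (Or.inr ⟨hc, rfl⟩))⟩
        exact not_ne_self hn u.1 (congrArg Prod.fst he).symm
      · rw [cross_eq_neg hc]
        refine ⟨fun he => ?_, Or.inl (Or.inr (Or.inl ⟨hc, rfl⟩))⟩
        exact hc (congrArg Prod.fst he)

end S8

open S8 in
/-- In HCN_n (n ≥ 3), two distinct vertices in the same cluster have exactly
0 or 2 common neighbors, and two vertices in different clusters have at most
1 common neighbor. -/
theorem stmt_8 (n : ℕ) (hn : 3 ≤ n) (u v : HVert n) (huv : u ≠ v) :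
    (u.1 = v.1 →
      {w | (HCN n).Adj u w ∧ (HCN n).Adj v w}.ncard = 0 ∨
      {w | (HCN n).Adj u w ∧ (HCN n).Adj v w}.ncard = 2) ∧
    (u.1 ≠ v.1 → {w | (HCN n).Adj u w ∧ (HCN n).Adj v w}.ncard ≤ 1) := by
  have hn0 : 0 < n := by omega
  constructor
  · intro h1
    have hmem : ∀ w : HVert n, ((HCN n).Adj u w ∧ (HCN n).Adj v w) ↔
        (u.1 = w.1 ∧ (diff u.2 w.2).card = 1 ∧ (diff v.2 w.2).card = 1) := by
      intro w
      rw [adj_iff hn0, adj_iff hn0]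
      constructor
      · rintro ⟨⟨hu1, hu2⟩ | rfl, ⟨hv1, hv2⟩ | hv⟩
        · exact ⟨hu1, hu2, hv2⟩
        · exfalso
          apply cross_fst_ne hn0 v
          rw [← hv, ← hu1, h1]
        · exact absurd (hv1.symm.trans h1.symm) (cross_fst_ne hn0 u)
        · exact absurd (cross_inj hv) huv
      · rintro ⟨hw, d1, d2⟩
        exact ⟨Or.inl ⟨hw, d1⟩, Or.inl ⟨h1 ▸ hw, d2⟩⟩
    rcases Set.eq_empty_or_nonempty {w | (HCN n).Adj u w ∧ (HCN n).Adj v w} with he | ⟨w0, hw0⟩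
    · left; rw [he, Set.ncard_empty]
    · right
      obtain ⟨hw1, hd1, hd2⟩ := (hmem w0).1 hw0
      obtain ⟨i, hi⟩ := card_diff_eq_one.mp hd1
      obtain ⟨j, hj⟩ := card_diff_eq_one.mp hd2
      have hyz : u.2 ≠ v.2 := fun h2 => huv (Prod.ext h1 h2)
      have hv2 : v.2 = bflip j (bflip i u.2) := by
        calc v.2 = bflip j (bflip j v.2) := (bflip_bflip v.2 j).symm
        _ = bflip j w0.2 := by rw [← hj]
        _ = bflip j (bflip i u.2) := by rw [hi]
      have hij : i ≠ j := by
        rintro rfl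
        have h2 : v.2 = u.2 := by rw [hv2, bflip_bflip]
        exact hyz h2.symm
      have hSeq : {w | (HCN n).Adj u w ∧ (HCN n).Adj v w} =
          {(u.1, bflip i u.2), (u.1, bflip j u.2)} := by
        ext w
        rw [Set.mem_setOf_eq, hmem w]
        constructor
        · rintro ⟨hw, d1, d2⟩
          obtain ⟨k, hk⟩ := card_diff_eq_one.mp d1
          obtain ⟨l, hl⟩ := card_diff_eq_one.mp d2
          have hv2' : v.2 = bflip l (bflip k u.2) := by
            calc v.2 = bflip l (bflip l v.2) := (bflip_bflip v.2 l).symm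
            _ = bflip l w.2 := by rw [← hl]
            _ = bflip l (bflip k u.2) := by rw [hk]
          have hkl : k ≠ l := by
            rintro rfl
            have h2 : v.2 = u.2 := by rw [hv2', bflip_bflip]
            exact hyz h2.symm
          have hdd : ({i, j} : Finset (Fin n)) = {k, l} := by
            rw [← diff_bflip_bflip u.2 hij, ← diff_bflip_bflip u.2 hkl, ← hv2, ← hv2']
          have hk2 : k = i ∨ k = j := by
            have hmk : k ∈ ({i, j} : Finset (Fin n)) := by rw [hdd]; simp
            simpa using hmk
          have hweq : w = (u.1, bflip k u.2) := Prod.ext hw.symm hk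
          rcases hk2 with rfl | rfl
          · exact Or.inl hweq
          · exact Or.inr hweq
        · rintro (rfl | rfl)
          · refine ⟨rfl, card_diff_eq_one.mpr ⟨i, rfl⟩, card_diff_eq_one.mpr ⟨j, ?_⟩⟩
            show bflip i u.2 = bflip j v.2
            rw [hv2, bflip_bflip]
          · refine ⟨rfl, card_diff_eq_one.mpr ⟨j, rfl⟩, card_diff_eq_one.mpr ⟨i, ?_⟩⟩
            show bflip j u.2 = bflip i v.2
            rw [hv2, bflip_comm, bflip_bflip]
      rw [hSeq]
      exact Set.ncard_pair (fun he => bflip_ne_bflip u.2 hij (congrArg Prod.snd he))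
  · intro h1
    have key : ¬ ((HCN n).Adj v (cross u) ∧ (HCN n).Adj u (cross v)) := by
      rintro ⟨hvc, huc⟩
      rw [adj_iff hn0] at hvc huc
      rcases hvc with ⟨ha1, ha2⟩ | he
      · rcases huc with ⟨hb1, hb2⟩ | he'
        · by_cases hu2 : u.1 = u.2 <;> by_cases hv2 : v.1 = v.2
          · simp only [cross_eq_pos hu2] at ha1 ha2
            have hve : v.2 = fun i => !u.2 i := by
              rw [← hv2, ha1, hu2]
            rw [hve, diff_self] at ha2
            simp at ha2
          · simp only [cross_eq_pos hu2] at ha1 ha2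
            simp only [cross_eq_neg hv2] at hb1 hb2
            have hveq : v.2 = u.2 := by rw [← hb1, hu2]
            rw [hveq, card_diff_not] at ha2
            omega
          · simp only [cross_eq_neg hu2] at ha1 ha2
            simp only [cross_eq_pos hv2] at hb1 hb2
            have hveq : v.2 = u.2 := by rw [← hv2, ← ha1]
            rw [hveq, card_diff_not] at hb2
            omega
          · simp only [cross_eq_neg hu2] at ha1 ha2
            simp only [cross_eq_neg hv2] at hb1 hb2
            rw [ha1, diff_self] at hb2
            simp at hb2
        · exact huv (cross_inj he'.symm)
      · exact huv (cross_inj he)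
    have hform : ∀ w, (HCN n).Adj u w ∧ (HCN n).Adj v w → w = cross u ∨ w = cross v := by
      intro w ⟨hau, hav⟩
      rw [adj_iff hn0] at hau hav
      rcases hau with ⟨ha, _⟩ | h2
      · rcases hav with ⟨hb, _⟩ | h3
        · exact absurd (ha.trans hb.symm) h1
        · exact Or.inr h3
      · exact Or.inl h2
    refine (Set.ncard_le_one (Set.toFinite _)).mpr ?_
    intro a ha b hb
    rw [Set.mem_setOf_eq] at ha hb
    rcases hform a ha with rfl | rfl <;> rcases hform b hb with rfl | rfl
    · rfl
    · exact absurd ⟨ha.2, hb.1⟩ key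
    · exact absurd ⟨hb.2, ha.1⟩ key
    · rfl
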